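/- Let $p$ be a prime and let $m \leq n$ be natural numbers. Suppose $G_0, G_1, \ldots, G_k$ are groups such that for each $0 \leq i < k$ there exist a group $\Gamma_i$ and elements $w_i, w_i' \in \Gamma_i$ together with surjective homomorphisms $\Gamma_i/\langle\langle w_i \rangle\rangle \to G_i$ and $\Gamma_i/\langle\langle w_i' \rangle\rangle \to G_{i+1}$ that are isomorphisms. If $G_0$ admits a surjective homomorphism onto $(\mathbb{Z}/p\mathbb{Z})^n$ and $G_k$ admits no surjective homomorphism onto $(\mathbb{Z}/p\mathbb{Z})^{m+1}$, then $k \geq n - m$. -/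

import Mathlib

universe u

private lemma restrict_surj {M : Type*} [Group M] {a b : ℕ} (h : a ≤ b) :
    ∃ ρ : (Fin b → M) →* (Fin a → M), Function.Surjective ρ := by
  refine ⟨MonoidHom.mk' (fun v => v ∘ Fin.castLE h) (fun _ _ => rfl), ?_⟩
  intro v
  refine ⟨fun i => if h' : (i : ℕ) < a then v ⟨i, h'⟩ else 1, ?_⟩
  funext i
  simp [Fin.castLE, i.isLt]

private lemma key {Γ : Type u} [Group Γ] (p r : ℕ) (hp : p.Prime) (w' : Γ)
    (φ : Γ →* (Fin (r + 1) → Multiplicative (ZMod p))) (hφ : Function.Surjective φ) :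
    ∃ ψ : Γ ⧸ Subgroup.normalClosure {w'} →* (Fin r → Multiplicative (ZMod p)),
      Function.Surjective ψ := by
  haveI := Fact.mk hp
  set V := (Fin (r + 1) → ZMod p) with hVdef
  let e : Multiplicative V ≃* (Fin (r + 1) → Multiplicative (ZMod p)) :=
    MulEquiv.piMultiplicative _
  let φ' : Γ →* Multiplicative V := e.symm.toMonoidHom.comp φ
  have hφ' : Function.Surjective φ' := e.symm.surjective.comp hφ
  let a : V := Multiplicative.toAdd (φ' w')
  let S : Submodule (ZMod p) V := Submodule.span (ZMod p) {a}
  have hV : Module.finrank (ZMod p) V = r + 1 := Module.finrank_fin_fun (ZMod p)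
  have hS : Module.finrank (ZMod p) S ≤ 1 := by
    have := finrank_span_le_card (R := ZMod p) ({a} : Set V)
    simpa using this
  have hQ : r ≤ Module.finrank (ZMod p) (V ⧸ S) := by
    have := S.finrank_quotient_add_finrank
    omega
  let π : Γ →* Multiplicative (V ⧸ S) :=
    (AddMonoidHom.toMultiplicative S.mkQ.toAddMonoidHom).comp φ'
  have hπ : Function.Surjective π := by
    intro q
    obtain ⟨v, hv⟩ := S.mkQ_surjective (Multiplicative.toAdd q)
    obtain ⟨x, hx⟩ := hφ' (Multiplicative.ofAdd v)
    exact ⟨x, by simp [π, hx, hv]⟩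
  have hker : Subgroup.normalClosure {w'} ≤ π.ker := by
    apply Subgroup.normalClosure_le_normal
    intro x hx
    simp only [Set.mem_singleton_iff] at hx
    have h1 : π w' = Multiplicative.ofAdd (S.mkQ a) := rfl
    have h2 : S.mkQ a = 0 := by
      simpa [S, Submodule.Quotient.mk_eq_zero] using Submodule.mem_span_singleton_self (R := ZMod p) a
    show x ∈ π.ker
    rw [MonoidHom.mem_ker, hx, h1, h2]
    rfl
  let ψ₀ : Γ ⧸ Subgroup.normalClosure {w'} →* Multiplicative (V ⧸ S) :=
    QuotientGroup.lift _ π hker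
  have hψ₀ : Function.Surjective ψ₀ := by
    intro q; obtain ⟨x, hx⟩ := hπ q; exact ⟨QuotientGroup.mk x, hx⟩
  let b := Module.finBasis (ZMod p) (V ⧸ S)
  let eQ : (V ⧸ S) ≃ₗ[ZMod p] (Fin (Module.finrank (ZMod p) (V ⧸ S)) → ZMod p) := b.equivFun
  let L : (Fin (Module.finrank (ZMod p) (V ⧸ S)) → ZMod p) →ₗ[ZMod p] (Fin r → ZMod p) :=
    LinearMap.funLeft (ZMod p) _ (Fin.castLE hQ)
  have hL : Function.Surjective L :=
    LinearMap.funLeft_surjective_of_injective _ _ _ (Fin.castLE_injective hQ)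
  let T : (V ⧸ S) →+ (Fin r → ZMod p) := (L.comp eQ.toLinearMap).toAddMonoidHom
  have hT : Function.Surjective T := hL.comp eQ.surjective
  let e2 : Multiplicative (Fin r → ZMod p) ≃* (Fin r → Multiplicative (ZMod p)) :=
    MulEquiv.piMultiplicative _
  refine ⟨e2.toMonoidHom.comp ((AddMonoidHom.toMultiplicative T).comp ψ₀), ?_⟩
  exact e2.surjective.comp (hT.comp hψ₀)

theorem stmt3 (p : ℕ) (hp : p.Prime) (m n k : ℕ) (hmn : m ≤ n)
    (G : Fin (k + 1) → Type u) (instG : ∀ i, Group (G i))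
    (hchain : ∀ i : Fin k, ∃ (Γ : Type u) (_ : Group Γ) (w w' : Γ)
      (f : Γ ⧸ Subgroup.normalClosure {w} →* G i.castSucc)
      (g : Γ ⧸ Subgroup.normalClosure {w'} →* G i.succ),
        Function.Surjective f ∧ Function.Surjective g ∧
        Function.Bijective f ∧ Function.Bijective g)
    (h0 : ∃ φ : G 0 →* (Fin n → Multiplicative (ZMod p)), Function.Surjective φ)
    (hk : ¬ ∃ ψ : G (Fin.last k) →* (Fin (m + 1) → Multiplicative (ZMod p)),
      Function.Surjective ψ) :
    k ≥ n - m := by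
  by_contra hcon
  have hkn : k < n - m := by omega
  have claim : ∀ j (hj : j ≤ k),
      ∃ ψ : G ⟨j, by omega⟩ →* (Fin (n - j) → Multiplicative (ZMod p)),
        Function.Surjective ψ := by
    intro j
    induction j with
    | zero => intro _; exact h0
    | succ j ih =>
      intro hj
      obtain ⟨ψ, hψ⟩ := ih (by omega)
      obtain ⟨Γ, _, w, w', f, g, hf, hg, hfb, hgb⟩ := hchain ⟨j, by omega⟩
      have hr : n - j = (n - (j + 1)) + 1 := by omega
      let f' : Γ ⧸ Subgroup.normalClosure {w} →* G ⟨j, by omega⟩ := f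
      have hf' : Function.Surjective f' := hf
      let g' : Γ ⧸ Subgroup.normalClosure {w'} →* G ⟨j + 1, by omega⟩ := g
      have hgb' : Function.Bijective g' := hgb
      have hsur : ∃ φ : Γ →* (Fin (n - (j + 1) + 1) → Multiplicative (ZMod p)),
          Function.Surjective φ := by
        rw [← hr]
        refine ⟨(ψ.comp f').comp (QuotientGroup.mk' _), ?_⟩
        exact hψ.comp (hf'.comp (QuotientGroup.mk'_surjective _))
      obtain ⟨φ, hφ⟩ := hsur
      obtain ⟨ψ', hψ'⟩ := key p (n - (j + 1)) hp w' φ hφ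
      let eg := MulEquiv.ofBijective g' hgb'
      exact ⟨ψ'.comp eg.symm.toMonoidHom, hψ'.comp eg.symm.surjective⟩
  obtain ⟨ψ, hψ⟩ := claim k le_rfl
  obtain ⟨ρ, hρ⟩ := restrict_surj (M := Multiplicative (ZMod p))
    (show m + 1 ≤ n - k by omega)
  refine hk ⟨ρ.comp ψ, hρ.comp hψ⟩
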